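/- (Hellinger error of Gaussian smoothing, quantitative form of Lemma 1 in the appendix.) Let g₀ be an absolutely continuous probability density on ℝ whose weak derivative g₀' is Lebesgue integrable. Let ĝ be any probability density on ℝ, let λ > 0, and define the Gaussian smoothing ĝ_λ(x) = λ⁻¹ ∫ ĝ(t) φ((x−t)/λ) dt, where φ is the standard Gaussian density. Then H(ĝ_λ, g₀)² ≤ √2 · H(ĝ, g₀) + 2√(2/π) · λ · ∫ |g₀'(z)| dz. -/

import Mathlib

set_option maxHeartbeats 1000000


open MeasureTheory

noncomputable section

/-- `f` is a probability density on `ℝ`. -/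
def IsProbDensity (f : ℝ → ℝ) : Prop :=
  (∀ x, 0 ≤ f x) ∧ Integrable f ∧ ∫ x, f x = 1

/-- Hellinger distance between densities: `H(f,g)² = ½∫(√f − √g)²`. -/
def hellingerDist (f g : ℝ → ℝ) : ℝ :=
  Real.sqrt ((1 / 2) * ∫ x, (Real.sqrt (f x) - Real.sqrt (g x)) ^ 2)

/-- The standard Gaussian density `φ(x) = (2π)^{-1/2} e^{-x²/2}`. -/
def gaussPdf (x : ℝ) : ℝ := (Real.sqrt (2 * Real.pi))⁻¹ * Real.exp (-(x ^ 2) / 2)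

section Aux
open Real Convolution

lemma gaussPdf_nonneg (x : ℝ) : 0 ≤ gaussPdf x := by
  unfold gaussPdf; positivity

lemma gaussPdf_continuous : Continuous gaussPdf := by
  unfold gaussPdf; fun_prop

lemma gaussPdf_eq (x : ℝ) : gaussPdf x = (Real.sqrt (2 * Real.pi))⁻¹ * Real.exp (-(1/2) * x ^ 2) := by
  unfold gaussPdf; congr 1; ring_nf

lemma integrable_gaussPdf : Integrable gaussPdf := by
  have h := (integrable_exp_neg_mul_sq (show (0:ℝ) < 1/2 by norm_num)).const_mul
    (Real.sqrt (2 * Real.pi))⁻¹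
  exact h.congr (ae_of_all _ fun x => (gaussPdf_eq x).symm)

lemma integral_gaussPdf : ∫ x, gaussPdf x = 1 := by
  simp only [gaussPdf_eq]
  rw [integral_const_mul, integral_gaussian]
  rw [show Real.pi / (1/2) = 2 * Real.pi by ring]
  rw [inv_mul_cancel₀]
  positivity

lemma sqrt_diff_mul {p q : ℝ} (hp : 0 ≤ p) (hq : 0 ≤ q) :
    |Real.sqrt p - Real.sqrt q| * (Real.sqrt p + Real.sqrt q) = |p - q| := by
  have h1 := Real.sq_sqrt hp
  have h2 := Real.sq_sqrt hq
  have h3 := Real.sqrt_nonneg p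
  have h4 := Real.sqrt_nonneg q
  have key : (Real.sqrt p - Real.sqrt q) * (Real.sqrt p + Real.sqrt q) = p - q := by nlinarith
  rw [← abs_of_nonneg (add_nonneg h3 h4), ← abs_mul, key]

lemma sq_sqrt_sub_le {p q : ℝ} (hp : 0 ≤ p) (hq : 0 ≤ q) :
    (Real.sqrt p - Real.sqrt q) ^ 2 ≤ |p - q| := by
  have key := sqrt_diff_mul hp hq
  have h3 := Real.sqrt_nonneg p
  have h4 := Real.sqrt_nonneg q
  have habs : |Real.sqrt p - Real.sqrt q| ≤ Real.sqrt p + Real.sqrt q := by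
    rw [abs_sub_le_iff]; constructor <;> linarith
  calc (Real.sqrt p - Real.sqrt q) ^ 2 = |Real.sqrt p - Real.sqrt q| * |Real.sqrt p - Real.sqrt q| := by
        rw [← sq_abs, pow_two]
    _ ≤ |Real.sqrt p - Real.sqrt q| * (Real.sqrt p + Real.sqrt q) :=
        mul_le_mul_of_nonneg_left habs (abs_nonneg _)
    _ = |p - q| := key

lemma abs_mul_gaussPdf_le (v : ℝ) :
    |v| * gaussPdf v ≤ Real.sqrt 2 * (Real.sqrt (2 * Real.pi))⁻¹ * Real.exp (-(1/4) * v ^ 2) := by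
  have h3 : (0:ℝ) ≤ Real.sqrt 2 := Real.sqrt_nonneg 2
  have hs2 : Real.sqrt 2 * Real.sqrt 2 = 2 := Real.mul_self_sqrt (by norm_num)
  have h1 : |v| ≤ Real.sqrt 2 * ((v ^ 2 + 2) / 4) := by
    nlinarith [mul_nonneg h3 (sq_nonneg (|v| - Real.sqrt 2)), sq_abs v, abs_nonneg v]
  have h2 : (v ^ 2 + 2) / 4 ≤ Real.exp ((v ^ 2 - 2) / 4) := by
    have := Real.add_one_le_exp ((v ^ 2 - 2) / 4); linarith
  have h5 : |v| ≤ Real.sqrt 2 * Real.exp ((v ^ 2 - 2) / 4) :=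
    h1.trans (by exact mul_le_mul_of_nonneg_left h2 h3)
  have hinv : (0:ℝ) ≤ (Real.sqrt (2 * Real.pi))⁻¹ := by positivity
  unfold gaussPdf
  have hexp : Real.exp ((v ^ 2 - 2) / 4) * Real.exp (-(v ^ 2) / 2) ≤ Real.exp (-(1/4) * v ^ 2) := by
    rw [← Real.exp_add]
    apply Real.exp_le_exp.2
    nlinarith [sq_nonneg v]
  calc |v| * ((Real.sqrt (2 * Real.pi))⁻¹ * Real.exp (-(v ^ 2) / 2))
      ≤ (Real.sqrt 2 * Real.exp ((v ^ 2 - 2) / 4)) * ((Real.sqrt (2 * Real.pi))⁻¹ * Real.exp (-(v ^ 2) / 2)) := by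
        apply mul_le_mul_of_nonneg_right h5 (by positivity)
    _ = Real.sqrt 2 * (Real.sqrt (2 * Real.pi))⁻¹ * (Real.exp ((v ^ 2 - 2) / 4) * Real.exp (-(v ^ 2) / 2)) := by ring
    _ ≤ Real.sqrt 2 * (Real.sqrt (2 * Real.pi))⁻¹ * Real.exp (-(1/4) * v ^ 2) := by
        apply mul_le_mul_of_nonneg_left hexp (by positivity)

lemma integrable_abs_mul_gaussPdf : Integrable (fun v => |v| * gaussPdf v) := by
  apply Integrable.mono' ((integrable_exp_neg_mul_sq (show (0:ℝ) < 1/4 by norm_num)).const_mul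
    (Real.sqrt 2 * (Real.sqrt (2 * Real.pi))⁻¹))
  · exact (continuous_abs.mul gaussPdf_continuous).aestronglyMeasurable
  · refine ae_of_all _ fun v => ?_
    rw [Real.norm_of_nonneg (mul_nonneg (abs_nonneg v) (gaussPdf_nonneg v))]
    exact abs_mul_gaussPdf_le v

lemma integral_abs_mul_gaussPdf_le : ∫ v, |v| * gaussPdf v ≤ 2 := by
  have hb : Integrable (fun v : ℝ => Real.sqrt 2 * (Real.sqrt (2 * Real.pi))⁻¹ * Real.exp (-(1/4) * v ^ 2)) :=
    (integrable_exp_neg_mul_sq (show (0:ℝ) < 1/4 by norm_num)).const_mul _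
  have h1 : ∫ v, |v| * gaussPdf v ≤ ∫ v, Real.sqrt 2 * (Real.sqrt (2 * Real.pi))⁻¹ * Real.exp (-(1/4) * v ^ 2) :=
    integral_mono integrable_abs_mul_gaussPdf hb (fun v => abs_mul_gaussPdf_le v)
  have h2 : ∫ v : ℝ, Real.sqrt 2 * (Real.sqrt (2 * Real.pi))⁻¹ * Real.exp (-(1/4) * v ^ 2)
      = Real.sqrt 2 * (Real.sqrt (2 * Real.pi))⁻¹ * Real.sqrt (Real.pi / (1/4)) := by
    rw [integral_const_mul, integral_gaussian]
  have hpi := Real.pi_pos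
  have h4 : Real.sqrt (Real.pi / (1/4)) = 2 * Real.sqrt Real.pi := by
    rw [show Real.pi / (1/4) = 4 * Real.pi by ring, Real.sqrt_mul (by norm_num),
      show (4:ℝ) = 2 ^ 2 by norm_num, Real.sqrt_sq (by norm_num)]
  have h5 : Real.sqrt (2 * Real.pi) = Real.sqrt 2 * Real.sqrt Real.pi := Real.sqrt_mul (by norm_num) _
  have hs2 : (0:ℝ) < Real.sqrt 2 := Real.sqrt_pos.2 (by norm_num)
  have hsp : (0:ℝ) < Real.sqrt Real.pi := Real.sqrt_pos.2 hpi
  calc ∫ v, |v| * gaussPdf v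
      ≤ ∫ v : ℝ, Real.sqrt 2 * (Real.sqrt (2 * Real.pi))⁻¹ * Real.exp (-(1/4) * v ^ 2) := h1
    _ = Real.sqrt 2 * (Real.sqrt (2 * Real.pi))⁻¹ * Real.sqrt (Real.pi / (1/4)) := h2
    _ = 2 := by rw [h4, h5]; field_simp

open Convolution

lemma abs_int_le {f : ℝ → ℝ} : |∫ x, f x| ≤ ∫ x, |f x| := by
  simpa [Real.norm_eq_abs] using norm_integral_le_integral_norm (μ := (volume : Measure ℝ)) f

lemma young_L1 (h K : ℝ → ℝ) (hh : Integrable h) (hKi : Integrable K)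
    (hK0 : ∀ u, 0 ≤ K u) (hK1 : ∫ u, K u = 1) :
    ∫ x, |∫ t, h t * K (x - t)| ≤ ∫ t, |h t| := by
  have hprod : Integrable (fun p : ℝ × ℝ => |h p.2| * K (p.1 - p.2)) (volume.prod volume) := by
    simpa using hh.abs.convolution_integrand (ContinuousLinearMap.mul ℝ ℝ) hKi
  have hmarg : Integrable (fun x => ∫ t, |h t| * K (x - t)) := hprod.integral_prod_left
  have hpt : ∀ x : ℝ, |∫ t, h t * K (x - t)| ≤ ∫ t, |h t| * K (x - t) := by
    intro x
    refine (abs_int_le).trans_eq ?_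
    refine integral_congr_ae (ae_of_all _ fun t => ?_)
    show |h t * K (x - t)| = |h t| * K (x - t)
    rw [abs_mul, abs_of_nonneg (hK0 _)]
  have hswap : ∫ x, ∫ t, |h t| * K (x - t) = ∫ t, ∫ x, |h t| * K (x - t) :=
    integral_integral_swap hprod
  calc ∫ x, |∫ t, h t * K (x - t)| ≤ ∫ x, ∫ t, |h t| * K (x - t) :=
      integral_mono_of_nonneg (ae_of_all _ fun x => abs_nonneg _) hmarg (ae_of_all _ hpt)
    _ = ∫ t, ∫ x, |h t| * K (x - t) := hswap
    _ = ∫ t, |h t| := by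
        refine integral_congr_ae (ae_of_all _ fun t => ?_)
        show ∫ x, |h t| * K (x - t) = |h t|
        rw [integral_const_mul, integral_sub_right_eq_self (fun z => K z) t, hK1, mul_one]

lemma translate_L1 (g₀ g₀' : ℝ → ℝ)
    (hAC : ∀ a b : ℝ, g₀ b - g₀ a = ∫ x in a..b, g₀' x)
    (hg₀' : Integrable g₀') (u : ℝ) :
    ∫ x, |g₀ (x - u) - g₀ x| ≤ |u| * ∫ z, |g₀' z| := by
  suffices H : ∀ u : ℝ, 0 ≤ u → ∫ x, |g₀ (x - u) - g₀ x| ≤ |u| * ∫ z, |g₀' z| by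
    rcases le_or_gt 0 u with hu | hu
    · exact H u hu
    · have e : ∫ x, |g₀ (x - u) - g₀ x| = ∫ x, |g₀ (x - -u) - g₀ x| := by
        rw [← integral_add_right_eq_self (fun x => |g₀ (x - u) - g₀ x|) u]
        refine integral_congr_ae (ae_of_all _ fun x => ?_)
        have h1 : x + u - u = x := by ring
        have h2 : x - -u = x + u := by ring
        simp only [h1, h2]
        rw [abs_sub_comm]
      rw [e, ← abs_neg u]
      exact H (-u) (by linarith)
  intro u hu
  have key : ∀ x : ℝ, |g₀ (x - u) - g₀ x| ≤ ∫ w in (0:ℝ)..u, |g₀' (x - w)| := by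
    intro x
    have h1 : g₀ (x - u) - g₀ x = -(∫ s in (x - u)..x, g₀' s) := by
      have := hAC (x - u) x; linarith
    rw [h1, abs_neg]
    have h2 : |∫ s in (x - u)..x, g₀' s| ≤ ∫ s in (x - u)..x, |g₀' s| :=
      intervalIntegral.abs_integral_le_integral_abs (by linarith)
    have h3 : ∫ w in (0:ℝ)..u, |g₀' (x - w)| = ∫ s in (x - u)..x, |g₀' s| := by
      rw [intervalIntegral.integral_comp_sub_left (fun s => |g₀' s|) x]
      norm_num
    rw [h3]; exact h2
  set ind : ℝ → ℝ := (Set.Ioc (0:ℝ) u).indicator (fun _ => (1:ℝ)) with hind_def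
  have hind : Integrable ind := by
    rw [hind_def, integrable_indicator_iff measurableSet_Ioc]
    exact integrableOn_const (C := (1:ℝ)) measure_Ioc_lt_top.ne
  have hQ : Integrable (fun q : ℝ × ℝ => ind q.2 * |g₀' (q.1 - q.2)|) (volume.prod volume) := by
    simpa using hind.convolution_integrand (ContinuousLinearMap.mul ℝ ℝ) hg₀'.abs
  have hmarg : Integrable (fun x => ∫ w, ind w * |g₀' (x - w)|) := hQ.integral_prod_left
  have hx_eq : ∀ x : ℝ, ∫ w in (0:ℝ)..u, |g₀' (x - w)| = ∫ w, ind w * |g₀' (x - w)| := by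
    intro x
    rw [intervalIntegral.integral_of_le hu, ← integral_indicator measurableSet_Ioc]
    refine integral_congr_ae (ae_of_all _ fun w => ?_)
    by_cases hw : w ∈ Set.Ioc (0:ℝ) u
    · simp [hind_def, Set.indicator_of_mem hw]
    · simp [hind_def, Set.indicator_of_notMem hw]
  have step1 : ∫ x, |g₀ (x - u) - g₀ x| ≤ ∫ x, ∫ w, ind w * |g₀' (x - w)| :=
    integral_mono_of_nonneg (ae_of_all _ fun x => abs_nonneg _) hmarg
      (ae_of_all _ fun x => (key x).trans_eq (hx_eq x))
  have hswap : ∫ x, ∫ w, ind w * |g₀' (x - w)| = ∫ w, ∫ x, ind w * |g₀' (x - w)| :=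
    integral_integral_swap hQ
  have hinner : ∀ w : ℝ, ∫ x, ind w * |g₀' (x - w)| = ind w * ∫ z, |g₀' z| := fun w => by
    rw [show (∫ x, ind w * |g₀' (x - w)|) = ind w * ∫ x, |g₀' (x - w)| from integral_const_mul _ _, integral_sub_right_eq_self (fun z => |g₀' z|) w]
  have hlast : ∫ w, ind w * ∫ z, |g₀' z| = u * ∫ z, |g₀' z| := by
    have he : (fun w => ind w * ∫ z, |g₀' z|) = (Set.Ioc (0:ℝ) u).indicator (fun _ => ∫ z, |g₀' z|) := by
      funext w; by_cases hw : w ∈ Set.Ioc (0:ℝ) u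
      · simp [hind_def, Set.indicator_of_mem hw]
      · simp [hind_def, Set.indicator_of_notMem hw]
    rw [he, integral_indicator measurableSet_Ioc, setIntegral_const, Real.volume_real_Ioc,
      smul_eq_mul, max_eq_left (by linarith)]
    norm_num
  calc ∫ x, |g₀ (x - u) - g₀ x| ≤ ∫ x, ∫ w, ind w * |g₀' (x - w)| := step1
    _ = ∫ w, ∫ x, ind w * |g₀' (x - w)| := hswap
    _ = ∫ w, ind w * ∫ z, |g₀' z| := integral_congr_ae (ae_of_all _ hinner)
    _ = u * ∫ z, |g₀' z| := hlast
    _ = |u| * ∫ z, |g₀' z| := by rw [abs_of_nonneg hu]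

lemma l1_le_two_sqrt (f g : ℝ → ℝ) (hf0 : ∀ x, 0 ≤ f x) (hfi : Integrable f) (hf1 : ∫ x, f x = 1)
    (hg0 : ∀ x, 0 ≤ g x) (hgi : Integrable g) (hg1 : ∫ x, g x = 1) :
    ∫ x, |f x - g x| ≤ 2 * Real.sqrt (∫ x, (Real.sqrt (f x) - Real.sqrt (g x)) ^ 2) := by
  set a : ℝ → ℝ := fun x => |Real.sqrt (f x) - Real.sqrt (g x)| with ha
  set b : ℝ → ℝ := fun x => Real.sqrt (f x) + Real.sqrt (g x) with hb
  have hsf : AEStronglyMeasurable (fun x => Real.sqrt (f x)) volume :=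
    Real.continuous_sqrt.comp_aestronglyMeasurable hfi.1
  have hsg : AEStronglyMeasurable (fun x => Real.sqrt (g x)) volume :=
    Real.continuous_sqrt.comp_aestronglyMeasurable hgi.1
  have hd : AEStronglyMeasurable (fun x => Real.sqrt (f x) - Real.sqrt (g x)) volume := hsf.sub hsg
  have ha_asm : AEStronglyMeasurable a volume := by
    refine hd.norm.congr (ae_of_all _ fun x => ?_)
    rw [ha]; simp [Real.norm_eq_abs]
  have hb_asm : AEStronglyMeasurable b volume := hsf.add hsg
  have hbound : Integrable (fun x => 2 * (f x + g x)) := (hfi.add hgi).const_mul 2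
  have hsq_a : Integrable (fun x => a x ^ 2) := by
    refine hbound.mono' ((ha_asm.mul ha_asm).congr (ae_of_all _ fun x => by simp only [Pi.mul_apply]; ring))
      (ae_of_all _ fun x => ?_)
    rw [Real.norm_of_nonneg (sq_nonneg _), ha]
    simp only [sq_abs]
    nlinarith [Real.sq_sqrt (hf0 x), Real.sq_sqrt (hg0 x), sq_nonneg (Real.sqrt (f x) + Real.sqrt (g x))]
  have hsq_b : Integrable (fun x => b x ^ 2) := by
    refine hbound.mono' ((hb_asm.mul hb_asm).congr (ae_of_all _ fun x => by simp only [Pi.mul_apply]; ring))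
      (ae_of_all _ fun x => ?_)
    rw [Real.norm_of_nonneg (sq_nonneg _), hb]
    change (Real.sqrt (f x) + Real.sqrt (g x)) ^ 2 ≤ 2 * (f x + g x)
    nlinarith [Real.sq_sqrt (hf0 x), Real.sq_sqrt (hg0 x), sq_nonneg (Real.sqrt (f x) - Real.sqrt (g x))]
  have hofr : (ENNReal.ofReal (2:ℝ)) = 2 := by norm_num
  have hmem_a : MemLp a (ENNReal.ofReal (2:ℝ)) volume := by
    rw [hofr]; exact (memLp_two_iff_integrable_sq ha_asm).2 hsq_a
  have hmem_b : MemLp b (ENNReal.ofReal (2:ℝ)) volume := by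
    rw [hofr]; exact (memLp_two_iff_integrable_sq hb_asm).2 hsq_b
  have hpq : Real.HolderConjugate 2 2 := Real.HolderConjugate.two_two
  have hCS := integral_mul_le_Lp_mul_Lq_of_nonneg hpq (ae_of_all _ fun x => abs_nonneg _)
    (ae_of_all _ fun x => add_nonneg (Real.sqrt_nonneg _) (Real.sqrt_nonneg _)) hmem_a hmem_b
  have hrpow : ∀ y : ℝ, y ^ (2:ℝ) = y ^ 2 := Real.rpow_two
  have hA : ∫ x, a x ^ (2:ℝ) = ∫ x, (Real.sqrt (f x) - Real.sqrt (g x)) ^ 2 := by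
    refine integral_congr_ae (ae_of_all _ fun x => ?_)
    show a x ^ (2:ℝ) = _
    rw [hrpow, ha]; simp [sq_abs]
  have hBint : ∫ x, b x ^ (2:ℝ) = ∫ x, b x ^ 2 :=
    integral_congr_ae (ae_of_all _ fun x => by show b x ^ (2:ℝ) = b x ^ 2; exact hrpow _)
  have hB : ∫ x, b x ^ (2:ℝ) ≤ 4 := by
    rw [hBint]
    calc ∫ x, b x ^ 2 ≤ ∫ x, 2 * (f x + g x) := by
          refine integral_mono hsq_b hbound fun x => ?_
          show b x ^ 2 ≤ 2 * (f x + g x)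
          rw [hb]
          change (Real.sqrt (f x) + Real.sqrt (g x)) ^ 2 ≤ 2 * (f x + g x)
          nlinarith [Real.sq_sqrt (hf0 x), Real.sq_sqrt (hg0 x), sq_nonneg (Real.sqrt (f x) - Real.sqrt (g x))]
      _ = 4 := by rw [integral_const_mul, integral_add hfi hgi, hf1, hg1]; norm_num
  have hA0 : (0:ℝ) ≤ ∫ x, a x ^ (2:ℝ) := by
    rw [hA]; exact integral_nonneg fun x => sq_nonneg _
  have hfour : ((4:ℝ)) ^ ((1:ℝ)/2) = 2 := by
    rw [show (4:ℝ) = 2 ^ (2:ℕ) by norm_num, ← Real.rpow_natCast 2 2, ← Real.rpow_mul (by norm_num)]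
    norm_num
  have hB0 : (0:ℝ) ≤ ∫ x, b x ^ (2:ℝ) := by
    rw [hBint]; exact integral_nonneg fun x => sq_nonneg _
  have hstep : (∫ x, b x ^ (2:ℝ)) ^ ((1:ℝ)/2) ≤ 2 := by
    exact le_trans (Real.rpow_le_rpow hB0 hB (by norm_num)) (le_of_eq hfour)
  have habs_eq : ∫ x, |f x - g x| = ∫ x, a x * b x := by
    refine integral_congr_ae (ae_of_all _ fun x => ?_)
    show |f x - g x| = a x * b x
    simp only [ha, hb]
    exact (sqrt_diff_mul (hf0 x) (hg0 x)).symm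
  have hSsqrt : (∫ x, a x ^ (2:ℝ)) ^ ((1:ℝ)/2)
      = Real.sqrt (∫ x, (Real.sqrt (f x) - Real.sqrt (g x)) ^ 2) := by
    rw [hA, Real.sqrt_eq_rpow]
  calc ∫ x, |f x - g x| = ∫ x, a x * b x := habs_eq
    _ ≤ (∫ x, a x ^ (2:ℝ)) ^ ((1:ℝ)/2) * (∫ x, b x ^ (2:ℝ)) ^ ((1:ℝ)/2) := by
        simp only [ha, hb]
        simpa [sq_abs] using hCS
    _ ≤ (∫ x, a x ^ (2:ℝ)) ^ ((1:ℝ)/2) * 2 := by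
        exact mul_le_mul_of_nonneg_left hstep (Real.rpow_nonneg hA0 _)
    _ = 2 * Real.sqrt (∫ x, (Real.sqrt (f x) - Real.sqrt (g x)) ^ 2) := by
        rw [hSsqrt]; ring

end Aux

/-- **Hellinger error of Gaussian smoothing** (quantitative form of Lemma 1).
Let `g₀` be an absolutely continuous probability density on `ℝ` with Lebesgue-integrable weak
derivative `g₀'`; let `ghat` be any probability density, `λ > 0`, and let
`ghat_λ(x) = λ⁻¹ ∫ ghat(t) φ((x−t)/λ) dt` be the Gaussian smoothing of `ghat`.  Then
`H(ghat_λ, g₀)² ≤ √2·H(ghat, g₀) + 2√(2/π)·λ·∫|g₀'|`. -/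
theorem hellinger_error_of_gaussian_smoothing
    (g₀ g₀' : ℝ → ℝ) (hg₀ : IsProbDensity g₀)
    (hAC : ∀ a b : ℝ, g₀ b - g₀ a = ∫ x in a..b, g₀' x)
    (hg₀' : Integrable g₀')
    (ghat : ℝ → ℝ) (hghat : IsProbDensity ghat)
    (l : ℝ) (hl : 0 < l) :
    (hellingerDist (fun x => l⁻¹ * ∫ t, ghat t * gaussPdf ((x - t) / l)) g₀) ^ 2 ≤
      Real.sqrt 2 * hellingerDist ghat g₀ +
        2 * Real.sqrt (2 / Real.pi) * l * ∫ z, |g₀' z| := by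
  obtain ⟨hg00, hg0i, hg01⟩ := hg₀
  obtain ⟨hh0, hhi, hh1⟩ := hghat
  set L := ContinuousLinearMap.mul ℝ ℝ with hLdef
  set K : ℝ → ℝ := fun u => l⁻¹ * gaussPdf (u / l) with hKdef
  have hK0 : ∀ u, 0 ≤ K u := fun u => mul_nonneg (by positivity) (gaussPdf_nonneg _)
  have hKc : Continuous K :=
    continuous_const.mul (gaussPdf_continuous.comp (continuous_id.div_const l))
  have hKi : Integrable K := (integrable_gaussPdf.comp_div hl.ne').const_mul l⁻¹
  have hK1 : ∫ u, K u = 1 := by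
    rw [hKdef]
    simp only
    rw [integral_const_mul, MeasureTheory.Measure.integral_comp_div gaussPdf l, integral_gaussPdf,
      smul_eq_mul, mul_one, abs_of_pos hl, inv_mul_cancel₀ hl.ne']
  have hKmom_eq : ∀ u : ℝ, (fun v => |v| * gaussPdf v) (u / l) = |u| * K u := by
    intro u
    show |u / l| * gaussPdf (u / l) = |u| * (l⁻¹ * gaussPdf (u / l))
    rw [abs_div, abs_of_pos hl, div_eq_mul_inv]
    ring
  have hKmomInt : Integrable (fun u => |u| * K u) :=
    (integrable_abs_mul_gaussPdf.comp_div hl.ne').congr (ae_of_all _ hKmom_eq)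
  have hKmom : ∫ u, |u| * K u ≤ 2 * l := by
    have h1 : ∫ u, |u| * K u = ∫ u, (fun v => |v| * gaussPdf v) (u / l) :=
      integral_congr_ae (ae_of_all _ fun u => (hKmom_eq u).symm)
    rw [h1, MeasureTheory.Measure.integral_comp_div (fun v => |v| * gaussPdf v) l, smul_eq_mul,
      abs_of_pos hl]
    calc l * ∫ v, |v| * gaussPdf v ≤ l * 2 :=
        mul_le_mul_of_nonneg_left integral_abs_mul_gaussPdf_le hl.le
      _ = 2 * l := by ring
  have hGfun : (fun x => l⁻¹ * ∫ t, ghat t * gaussPdf ((x - t) / l))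
      = fun x => ∫ t, ghat t * K (x - t) := by
    funext x
    rw [← integral_const_mul]
    refine integral_congr_ae (ae_of_all _ fun t => ?_)
    show l⁻¹ * (ghat t * gaussPdf ((x - t) / l)) = ghat t * (l⁻¹ * gaussPdf ((x - t) / l))
    ring
  rw [hGfun]
  set G : ℝ → ℝ := fun x => ∫ t, ghat t * K (x - t) with hGdef
  set G₀ : ℝ → ℝ := fun x => ∫ t, g₀ t * K (x - t) with hG0def
  have hGi : Integrable G := by
    refine (hhi.integrable_convolution L hKi).congr (ae_of_all _ fun x => ?_)
    simp [convolution_def, hLdef, ContinuousLinearMap.mul_apply', hGdef]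
  have hG0i : Integrable G₀ := by
    refine (hg0i.integrable_convolution L hKi).congr (ae_of_all _ fun x => ?_)
    simp [convolution_def, hLdef, ContinuousLinearMap.mul_apply', hG0def]
  have haeg : ∀ᵐ x : ℝ, Integrable (fun t => ghat t * K (x - t)) := by
    filter_upwards [hhi.ae_convolution_exists L hKi] with x hx
    simpa [ConvolutionExistsAt, hLdef, ContinuousLinearMap.mul_apply'] using hx
  have haeg0 : ∀ᵐ x : ℝ, Integrable (fun t => g₀ t * K (x - t)) := by
    filter_upwards [hg0i.ae_convolution_exists L hKi] with x hx
    simpa [ConvolutionExistsAt, hLdef, ContinuousLinearMap.mul_apply'] using hx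
  have haeSec : ∀ᵐ x : ℝ, Integrable (fun u => K u * g₀ (x - u)) := by
    have hprod : Integrable (fun p : ℝ × ℝ => K p.2 * g₀ (p.1 - p.2)) (volume.prod volume) := by
      simpa [hLdef] using hKi.convolution_integrand L hg0i
    have hasm : AEStronglyMeasurable (fun p : ℝ × ℝ => K p.2 * g₀ (p.1 - p.2))
        (volume.prod volume) := hprod.aestronglyMeasurable
    filter_upwards [((integrable_prod_iff hasm).mp hprod).1] with x hx
    simpa using hx
  -- smoothing pointwise bound
  have hsm : ∀ᵐ x : ℝ, |G₀ x - g₀ x| ≤ ∫ u, K u * |g₀ (x - u) - g₀ x| := by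
    filter_upwards [haeSec] with x hx
    have e1 : G₀ x = ∫ u, K u * g₀ (x - u) := by
      rw [hG0def]
      simp only
      rw [← integral_sub_left_eq_self (fun t => g₀ t * K (x - t)) volume x]
      refine integral_congr_ae (ae_of_all _ fun u => ?_)
      show g₀ (x - u) * K (x - (x - u)) = K u * g₀ (x - u)
      rw [sub_sub_cancel]; ring
    have e3 : ∫ u, (K u * g₀ (x - u) - K u * g₀ x) = (∫ u, K u * g₀ (x - u)) - g₀ x := by
      rw [integral_sub hx (hKi.mul_const (g₀ x)),
        show (∫ u, K u * g₀ x) = (∫ u, K u) * g₀ x from integral_mul_const _ _, hK1, one_mul]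
    calc |G₀ x - g₀ x| = |∫ u, (K u * g₀ (x - u) - K u * g₀ x)| := by rw [e1, e3]
      _ ≤ ∫ u, |K u * g₀ (x - u) - K u * g₀ x| := abs_int_le
      _ = ∫ u, K u * |g₀ (x - u) - g₀ x| := by
          refine integral_congr_ae (ae_of_all _ fun u => ?_)
          show |K u * g₀ (x - u) - K u * g₀ x| = K u * |g₀ (x - u) - g₀ x|
          rw [← mul_sub, abs_mul, abs_of_nonneg (hK0 u)]
  have hg0c : Continuous g₀ := by
    have he : g₀ = fun b => g₀ 0 + ∫ s in (0:ℝ)..b, g₀' s := by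
      funext b; have := hAC 0 b; linarith
    rw [he]
    exact continuous_const.add (hg₀'.continuous_primitive 0)
  have hconv2 : Integrable (fun q : ℝ × ℝ => K q.2 * g₀ (q.1 - q.2)) (volume.prod volume) := by
    simpa [hLdef] using hKi.convolution_integrand L hg0i
  have hprodmul : Integrable (fun q : ℝ × ℝ => g₀ q.1 * K q.2) (volume.prod volume) :=
    hg0i.mul_prod hKi
  have hP : Integrable (fun q : ℝ × ℝ => K q.2 * |g₀ (q.1 - q.2) - g₀ q.1|)
      (volume.prod volume) := by
    refine (hconv2.add hprodmul).mono' ?_ (ae_of_all _ fun q => ?_)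
    · exact ((hKc.comp continuous_snd).mul
        (((hg0c.comp (continuous_fst.sub continuous_snd)).sub
          (hg0c.comp continuous_fst)).abs)).aestronglyMeasurable
    · rw [Real.norm_of_nonneg (mul_nonneg (hK0 _) (abs_nonneg _))]
      have h1 : |g₀ (q.1 - q.2) - g₀ q.1| ≤ g₀ (q.1 - q.2) + g₀ q.1 := by
        have := hg00 (q.1 - q.2); have := hg00 q.1
        refine abs_le.2 ⟨by linarith, by linarith⟩
      calc K q.2 * |g₀ (q.1 - q.2) - g₀ q.1| ≤ K q.2 * (g₀ (q.1 - q.2) + g₀ q.1) :=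
          mul_le_mul_of_nonneg_left h1 (hK0 _)
        _ = K q.2 * g₀ (q.1 - q.2) + g₀ q.1 * K q.2 := by ring
  have hPmarg : Integrable (fun x => ∫ u, K u * |g₀ (x - u) - g₀ x|) := hP.integral_prod_left
  have hPswap : ∫ x, ∫ u, K u * |g₀ (x - u) - g₀ x| = ∫ u, ∫ x, K u * |g₀ (x - u) - g₀ x| :=
    integral_integral_swap hP
  have hDf0 : (0:ℝ) ≤ ∫ z, |g₀' z| := integral_nonneg fun z => abs_nonneg _
  have hsmooth : ∫ x, |G₀ x - g₀ x| ≤ 2 * l * ∫ z, |g₀' z| := by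
    calc ∫ x, |G₀ x - g₀ x| ≤ ∫ x, ∫ u, K u * |g₀ (x - u) - g₀ x| :=
        integral_mono_of_nonneg (ae_of_all _ fun x => abs_nonneg _) hPmarg hsm
      _ = ∫ u, ∫ x, K u * |g₀ (x - u) - g₀ x| := hPswap
      _ = ∫ u, K u * ∫ x, |g₀ (x - u) - g₀ x| := by
          refine integral_congr_ae (ae_of_all _ fun u => ?_)
          show (∫ x, K u * |g₀ (x - u) - g₀ x|) = K u * ∫ x, |g₀ (x - u) - g₀ x|
          exact integral_const_mul _ _
      _ ≤ ∫ u, |u| * K u * ∫ z, |g₀' z| := by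
          refine integral_mono_of_nonneg
            (ae_of_all _ fun u => mul_nonneg (hK0 u) (integral_nonneg fun x => abs_nonneg _))
            (hKmomInt.mul_const _) (ae_of_all _ fun u => ?_)
          show K u * ∫ x, |g₀ (x - u) - g₀ x| ≤ |u| * K u * ∫ z, |g₀' z|
          have ht := translate_L1 g₀ g₀' hAC hg₀' u
          calc K u * ∫ x, |g₀ (x - u) - g₀ x| ≤ K u * (|u| * ∫ z, |g₀' z|) :=
              mul_le_mul_of_nonneg_left ht (hK0 u)
            _ = |u| * K u * ∫ z, |g₀' z| := by ring
      _ = (∫ u, |u| * K u) * ∫ z, |g₀' z| := integral_mul_const _ _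
      _ ≤ 2 * l * ∫ z, |g₀' z| := mul_le_mul_of_nonneg_right hKmom hDf0
  -- Young
  have hdiffi : Integrable (fun t => ghat t - g₀ t) := hhi.sub hg0i
  have hyoung0 := young_L1 (fun t => ghat t - g₀ t) K hdiffi hKi hK0 hK1
  have hae_split : ∀ᵐ x : ℝ, |G x - G₀ x| = |∫ t, (ghat t - g₀ t) * K (x - t)| := by
    filter_upwards [haeg, haeg0] with x h1 h2
    rw [hGdef, hG0def]
    simp only
    rw [← integral_sub h1 h2]
    congr 1
    refine integral_congr_ae (ae_of_all _ fun t => ?_)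
    show ghat t * K (x - t) - g₀ t * K (x - t) = (ghat t - g₀ t) * K (x - t)
    ring
  have hyoung : ∫ x, |G x - G₀ x| ≤ ∫ t, |ghat t - g₀ t| := by
    rw [integral_congr_ae hae_split]; exact hyoung0
  -- Hellinger algebra
  have hGnn : ∀ x, 0 ≤ G x := fun x => integral_nonneg fun t => mul_nonneg (hh0 t) (hK0 _)
  have hH2 : hellingerDist G g₀ ^ 2 = (1/2) * ∫ x, (Real.sqrt (G x) - Real.sqrt (g₀ x)) ^ 2 := by
    unfold hellingerDist
    exact Real.sq_sqrt (mul_nonneg (by norm_num) (integral_nonneg fun x => sq_nonneg _))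
  have hRHSint : Integrable (fun x => |G x - G₀ x| + |G₀ x - g₀ x|) :=
    ((hGi.sub hG0i).abs).add ((hG0i.sub hg0i).abs)
  have h1 : ∫ x, (Real.sqrt (G x) - Real.sqrt (g₀ x)) ^ 2
      ≤ ∫ x, (|G x - G₀ x| + |G₀ x - g₀ x|) := by
    refine integral_mono_of_nonneg (ae_of_all _ fun x => sq_nonneg _) hRHSint
      (ae_of_all _ fun x => ?_)
    exact (sq_sqrt_sub_le (hGnn x) (hg00 x)).trans (abs_sub_le _ _ _)
  have h4 : ∫ x, (|G x - G₀ x| + |G₀ x - g₀ x|)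
      = (∫ x, |G x - G₀ x|) + ∫ x, |G₀ x - g₀ x| :=
    integral_add ((hGi.sub hG0i).abs) ((hG0i.sub hg0i).abs)
  have hCS := l1_le_two_sqrt ghat g₀ hh0 hhi hh1 hg00 hg0i hg01
  have hRHS1 : Real.sqrt 2 * hellingerDist ghat g₀
      = Real.sqrt (∫ x, (Real.sqrt (ghat x) - Real.sqrt (g₀ x)) ^ 2) := by
    unfold hellingerDist
    rw [← Real.sqrt_mul (by norm_num : (0:ℝ) ≤ 2)]
    congr 1
    ring
  have hsqS0 : (0:ℝ) ≤ Real.sqrt (∫ x, (Real.sqrt (ghat x) - Real.sqrt (g₀ x)) ^ 2) :=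
    Real.sqrt_nonneg _
  have hldf : l * ∫ z, |g₀' z| ≤ 2 * Real.sqrt (2 / Real.pi) * l * ∫ z, |g₀' z| := by
    have hq : (1/4:ℝ) ≤ 2 / Real.pi := by
      rw [le_div_iff₀ Real.pi_pos]
      nlinarith [Real.pi_le_four]
    have hs : (1/2:ℝ) ≤ Real.sqrt (2 / Real.pi) := (Real.le_sqrt' (by norm_num)).2 (by
      rw [show ((1:ℝ)/2) ^ 2 = 1/4 by norm_num]; exact hq)
    have h1' : (1:ℝ) ≤ 2 * Real.sqrt (2 / Real.pi) := by linarith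
    calc l * ∫ z, |g₀' z| = 1 * (l * ∫ z, |g₀' z|) := by ring
      _ ≤ (2 * Real.sqrt (2 / Real.pi)) * (l * ∫ z, |g₀' z|) :=
          mul_le_mul_of_nonneg_right h1' (mul_nonneg hl.le hDf0)
      _ = 2 * Real.sqrt (2 / Real.pi) * l * ∫ z, |g₀' z| := by ring
  rw [hH2, hRHS1]
  linarith [hyoung, hsmooth, h1, h4, hCS, hldf]
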